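/- Let Φ be a crystallographic root system and R ⊆ Φ a Φ-poset. R has no proper extension (i.e. R is the unique Φ-poset containing R) if and only if {α, -α} ∩ R ≠ ∅ for every α ∈ Φ. -/

import Mathlib

open Pointwise

structure RootSys (V : Type*) [NormedAddCommGroup V] [InnerProductSpace ℝ V] where
  Φ : Set V
  finite : Φ.Finite
  nonzero : ∀ α ∈ Φ, α ≠ (0 : V)
  line : ∀ α ∈ Φ, Φ ∩ {x : V | ∃ t : ℝ, x = t • α} = {α, -α}
  reflect : ∀ α ∈ Φ, ∀ β ∈ Φ, β - (2 * (inner ℝ α β : ℝ) / (inner ℝ α α : ℝ)) • α ∈ Φ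

variable {V : Type*} [NormedAddCommGroup V] [InnerProductSpace ℝ V]

/-- `Φ` is crystallographic: `⟨α^∨, β⟩ ∈ ℤ` for all roots `α, β`. -/
def RootSys.IsCrystallographic (R : RootSys V) : Prop :=
  ∀ α ∈ R.Φ, ∀ β ∈ R.Φ, ∃ n : ℤ, 2 * (inner ℝ α β : ℝ) / (inner ℝ α α : ℝ) = (n : ℝ)

/-- A subset `S ⊆ Φ` is closed if it is stable under sums of two elements staying in `Φ`. -/
def RootSys.IsClosedSubset (R : RootSys V) (S : Set V) : Prop :=
  ∀ α ∈ S, ∀ β ∈ S, α + β ∈ R.Φ → α + β ∈ S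

/-- A set of roots is antisymmetric if it never contains both `α` and `-α`. -/
def IsAntisymSet (S : Set V) : Prop := ∀ α ∈ S, -α ∉ S

/-- A `Φ`-poset: an antisymmetric closed subset of `Φ`. -/
def RootSys.IsPoset (R : RootSys V) (S : Set V) : Prop :=
  S ⊆ R.Φ ∧ IsAntisymSet S ∧ R.IsClosedSubset S

/-- Closure: roots that are nonnegative integer combinations (multiset sums) of elements of `T`. -/
def RootSys.clos (R : RootSys V) (T : Set V) : Set V :=
  {γ ∈ R.Φ | ∃ M : Multiset V, (∀ x ∈ M, x ∈ T) ∧ M.sum = γ}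

/-- Nonnegative integer combinations (multiset sums) of elements of `T`. -/
def nncomb (T : Set V) : Set V :=
  {v | ∃ M : Multiset V, (∀ x ∈ M, x ∈ T) ∧ M.sum = v}

/-- A root system equipped with a generic linear functional determining positive roots. -/
structure PosRootSys (V : Type*) [NormedAddCommGroup V] [InnerProductSpace ℝ V]
    extends RootSys V where
  f : V →ₗ[ℝ] ℝ
  generic : ∀ α ∈ Φ, f α ≠ 0

def PosRootSys.Pos (P : PosRootSys V) : Set V := {α ∈ P.Φ | 0 < P.f α}

def PosRootSys.Neg (P : PosRootSys V) : Set V := {α ∈ P.Φ | P.f α < 0}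

/-- The weak order: `R ≼ S` iff `R⁺ ⊇ S⁺` and `R⁻ ⊆ S⁻`. -/
def PosRootSys.wle (P : PosRootSys V) (R S : Set V) : Prop :=
  S ∩ P.Pos ⊆ R ∩ P.Pos ∧ R ∩ P.Neg ⊆ S ∩ P.Neg

/-- `R` is semiclosed if both `R⁺` and `R⁻` are closed. -/
def PosRootSys.SemiClosed (P : PosRootSys V) (S : Set V) : Prop :=
  S ⊆ P.Φ ∧ P.toRootSys.IsClosedSubset (S ∩ P.Pos) ∧
    P.toRootSys.IsClosedSubset (S ∩ P.Neg)

/-- Negative closure deletion. -/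
def PosRootSys.ncd (P : PosRootSys V) (S : Set V) : Set V :=
  S \ {α | α ∈ S ∩ P.Neg ∧ ∃ X : Finset V, ↑X ⊆ S ∩ P.Pos ∧ α + X.sum id ∈ P.Φ \ S}

/-- Positive closure deletion. -/
def PosRootSys.pcd (P : PosRootSys V) (S : Set V) : Set V :=
  S \ {α | α ∈ S ∩ P.Pos ∧ ∃ X : Finset V, ↑X ⊆ S ∩ P.Neg ∧ α + X.sum id ∈ P.Φ \ S}

/-- Meet formula on closed subsets. -/
def PosRootSys.wmeet (P : PosRootSys V) (R S : Set V) : Set V :=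
  P.ncd (P.toRootSys.clos ((R ∪ S) ∩ P.Pos) ∪ ((R ∩ S) ∩ P.Neg))

/-- Join formula on closed subsets. -/
def PosRootSys.wjoin (P : PosRootSys V) (R S : Set V) : Set V :=
  P.pcd (((R ∩ S) ∩ P.Pos) ∪ P.toRootSys.clos ((R ∪ S) ∩ P.Neg))

open RealInnerProductSpace

lemma inner_self_pos' {x : V} (hx : x ≠ 0) : 0 < ⟪x, x⟫ :=
  lt_of_le_of_ne real_inner_self_nonneg fun h => hx (inner_self_eq_zero.mp h.symm)

lemma RootSys.neg_mem (R : RootSys V) {α : V} (hα : α ∈ R.Φ) : -α ∈ R.Φ := by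
  have h := R.line α hα
  have : -α ∈ R.Φ ∩ {x : V | ∃ t : ℝ, x = t • α} := by rw [h]; right; rfl
  exact this.1

/-- If two roots have negative inner product and are not opposite, their sum is a root. -/
lemma RootSys.add_root_mem (R : RootSys V) (hcr : R.IsCrystallographic) {α β : V}
    (hα : α ∈ R.Φ) (hβ : β ∈ R.Φ) (hneg : ⟪α, β⟫ < 0) (hne : α + β ≠ 0) :
    α + β ∈ R.Φ := by
  have hα0 : α ≠ 0 := R.nonzero α hα
  have hβ0 : β ≠ 0 := R.nonzero β hβ
  have hαα : (0:ℝ) < ⟪α, α⟫ := inner_self_pos' hα0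
  have hββ : (0:ℝ) < ⟪β, β⟫ := inner_self_pos' hβ0
  obtain ⟨n, hn⟩ := hcr α hα β hβ
  obtain ⟨m, hm⟩ := hcr β hβ α hα
  rw [real_inner_comm] at hm
  have hn' : 2 * ⟪α, β⟫ = n * ⟪α, α⟫ := by
    field_simp at hn; linarith
  have hm' : 2 * ⟪α, β⟫ = m * ⟪β, β⟫ := by
    field_simp at hm; linarith
  have hnneg : (n:ℝ) < 0 := by nlinarith
  have hmneg : (m:ℝ) < 0 := by nlinarith
  by_cases hn1 : n = -1
  · have h := R.reflect α hα β hβ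
    rw [hn] at h
    rw [hn1] at h
    push_cast at h
    simpa [add_comm, sub_eq_add_neg] using h
  by_cases hm1 : m = -1
  · have h := R.reflect β hβ α hα
    rw [real_inner_comm] at h
    rw [hm] at h
    rw [hm1] at h
    push_cast at h
    simpa [sub_eq_add_neg] using h
  · exfalso
    have hn2 : (n:ℝ) ≤ -2 := by
      have h1 : n < 0 := by exact_mod_cast hnneg
      have : n ≤ -2 := by omega
      exact_mod_cast this
    have hm2 : (m:ℝ) ≤ -2 := by
      have h1 : m < 0 := by exact_mod_cast hmneg
      have : m ≤ -2 := by omega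
      exact_mod_cast this
    have hcs := real_inner_mul_inner_self_le α β
    have hprod : (n:ℝ) * m ≤ 4 := by
      have h4 : (n:ℝ) * m * (⟪α,α⟫ * ⟪β,β⟫) = 4 * (⟪α,β⟫ * ⟪α,β⟫) := by
        nlinarith [hn', hm']
      nlinarith [mul_pos hαα hββ]
    have hkey : (0:ℝ) ≤ (-(n:ℝ) - 2) * (-(m:ℝ) - 2) :=
      mul_nonneg (by linarith) (by linarith)
    have hneq : (n:ℝ) = -2 := by nlinarith
    have hmeq : (m:ℝ) = -2 := by nlinarith
    have hαβ1 : ⟪α, β⟫ = -⟪α, α⟫ := by rw [hneq] at hn'; linarith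
    have hαβ2 : ⟪α, β⟫ = -⟪β, β⟫ := by rw [hmeq] at hm'; linarith
    have hzero : ⟪α + β, α + β⟫ = 0 := by
      rw [real_inner_add_add_self]; linarith
    exact hne (inner_self_eq_zero.mp hzero)

lemma multiset_nsmul_sum {M : Type*} [AddCommMonoid M] (n : ℕ) (s : Multiset M) :
    (n • s).sum = n • s.sum := by
  induction n with
  | zero => simp
  | succ n ih => simp [succ_nsmul, Multiset.sum_add, ih]

lemma multiset_sum_nonpos {s : Multiset ℝ} (h : ∀ x ∈ s, x ≤ 0) : s.sum ≤ 0 := by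
  induction s using Multiset.induction with
  | empty => simp
  | cons a s ih =>
      rw [Multiset.sum_cons]
      exact add_nonpos (h a (by simp)) (ih fun x hx => h x (by simp [hx]))

lemma exists_inner_neg (β : V) (M : Multiset V) (h : ⟪β, M.sum⟫ < 0) :
    ∃ x ∈ M, ⟪β, x⟫ < 0 := by
  by_contra hc
  push_neg at hc
  have hmap : ⟪β, M.sum⟫ = (M.map (fun x => ⟪β, x⟫)).sum := by
    have := map_multiset_sum (innerSL ℝ β) M
    simpa using this
  have hge : (0:ℝ) ≤ (M.map (fun x => ⟪β, x⟫)).sum := by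
    apply Multiset.sum_nonneg
    intro x hx
    obtain ⟨y, hy, rfl⟩ := Multiset.mem_map.mp hx
    exact hc y hy
  rw [hmap] at h
  linarith

lemma exists_inner_pos (β : V) (M : Multiset V) (h : 0 < ⟪β, M.sum⟫) :
    ∃ x ∈ M, 0 < ⟪β, x⟫ := by
  have h' : ⟪-β, M.sum⟫ < 0 := by rw [inner_neg_left]; linarith
  obtain ⟨x, hx, hx'⟩ := exists_inner_neg (-β) M h'
  rw [inner_neg_left] at hx'
  exact ⟨x, hx, by linarith⟩

/-- In a poset, no nonempty multiset of elements sums to zero. -/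
lemma poset_no_zero_sum (R : RootSys V) (hcr : R.IsCrystallographic)
    (S : Set V) (hS : R.IsPoset S) :
    ∀ n (M : Multiset V), Multiset.card M ≤ n → (∀ x ∈ M, x ∈ S) → M.sum = 0 → M = 0 := by
  intro n
  induction n with
  | zero =>
      intro M hcard _ _
      exact Multiset.card_eq_zero.mp (Nat.le_zero.mp hcard)
  | succ n ih =>
      intro M hcard hmem hsum
      classical
      by_contra hM
      obtain ⟨x, hx⟩ := Multiset.exists_mem_of_ne_zero hM
      have hxS := hmem x hx
      have hxΦ := hS.1 hxS
      have hx0 : x ≠ 0 := R.nonzero x hxΦ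
      have herase : x + (M.erase x).sum = 0 := by
        rw [← Multiset.sum_cons, Multiset.cons_erase hx, hsum]
      have hesum : (M.erase x).sum = -x := eq_neg_of_add_eq_zero_right herase
      have hin : ⟪x, (M.erase x).sum⟫ < 0 := by
        rw [hesum, inner_neg_right]
        simpa using inner_self_pos' hx0
      obtain ⟨y, hy, hxy⟩ := exists_inner_neg x (M.erase x) hin
      have hyS := hmem y (Multiset.mem_of_mem_erase hy)
      have hyΦ := hS.1 hyS
      by_cases hxy0 : x + y = 0
      · have hyx : y = -x := by
          have := eq_neg_of_add_eq_zero_right hxy0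
          exact this
        exact hS.2.1 x hxS (hyx ▸ hyS)
      · have hsumΦ : x + y ∈ R.Φ := R.add_root_mem hcr hxΦ hyΦ hxy hxy0
        have hsumS : x + y ∈ S := hS.2.2 x hxS y hyS hsumΦ
        set M' : Multiset V := (x + y) ::ₘ ((M.erase x).erase y) with hM'
        have hycard : 1 ≤ Multiset.card (M.erase x) := by
          rw [Nat.one_le_iff_ne_zero]
          intro h0
          rw [Multiset.card_eq_zero.mp h0] at hy
          exact absurd hy (Multiset.notMem_zero y)
        have h1 : Multiset.card (M.erase x) = Multiset.card M - 1 := by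
          rw [Multiset.card_erase_of_mem hx, Nat.pred_eq_sub_one]
        have h2 : Multiset.card ((M.erase x).erase y)
            = Multiset.card (M.erase x) - 1 := by
          rw [Multiset.card_erase_of_mem hy, Nat.pred_eq_sub_one]
        have hM'card : Multiset.card M' ≤ n := by
          simp only [hM', Multiset.card_cons]
          omega
        have hM'mem : ∀ z ∈ M', z ∈ S := by
          intro z hz
          rcases Multiset.mem_cons.mp hz with h | h
          · exact h ▸ hsumS
          · exact hmem z (Multiset.mem_of_mem_erase (Multiset.mem_of_mem_erase h))
        have hM'sum : M'.sum = 0 := by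
          have h1 : y + ((M.erase x).erase y).sum = (M.erase x).sum := by
            rw [← Multiset.sum_cons, Multiset.cons_erase hy]
          have h2 : M'.sum = x + y + ((M.erase x).erase y).sum := Multiset.sum_cons _ _
          rw [h2, add_assoc, h1, herase]
        have := ih M' hM'card hM'mem hM'sum
        exact Multiset.cons_ne_zero this

/-- In a poset, a multiset of elements summing to a root has its sum in the poset. -/
lemma poset_sum_mem (R : RootSys V) (hcr : R.IsCrystallographic)
    (S : Set V) (hS : R.IsPoset S) :
    ∀ n (M : Multiset V), Multiset.card M ≤ n → (∀ x ∈ M, x ∈ S) →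
      M.sum ∈ R.Φ → M.sum ∈ S := by
  intro n
  induction n with
  | zero =>
      intro M hcard _ hΦ
      rw [Multiset.card_eq_zero.mp (Nat.le_zero.mp hcard)] at hΦ
      exact absurd rfl (R.nonzero _ (by simpa using hΦ))
  | succ n ih =>
      intro M hcard hmem hΦ
      classical
      have hβ0 : M.sum ≠ 0 := R.nonzero _ hΦ
      have hpos : 0 < ⟪M.sum, M.sum⟫ := inner_self_pos' hβ0
      obtain ⟨x, hx, hxpos⟩ := exists_inner_pos M.sum M hpos
      have hxS := hmem x hx
      have hxΦ := hS.1 hxS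
      have hsplit : x + (M.erase x).sum = M.sum := by
        rw [← Multiset.sum_cons, Multiset.cons_erase hx]
      by_cases hxβ : M.sum = x
      · exact hxβ ▸ hxS
      · have hdΦ : -x + M.sum ∈ R.Φ := by
          apply R.add_root_mem hcr (R.neg_mem hxΦ) hΦ
          · rw [inner_neg_left]
            exact neg_neg_of_pos (by rwa [real_inner_comm] at hxpos)
          · intro h0
            exact hxβ (by linear_combination (norm := abel) h0)
        have heq : -x + M.sum = (M.erase x).sum := by
          rw [← hsplit, neg_add_cancel_left]
        rw [heq] at hdΦ
        have hecard : Multiset.card (M.erase x) ≤ n := by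
          have h1 : Multiset.card (M.erase x) = Multiset.card M - 1 := by
            rw [Multiset.card_erase_of_mem hx, Nat.pred_eq_sub_one]
          have h2 : 1 ≤ Multiset.card M := by
            rw [Nat.one_le_iff_ne_zero]
            intro h0
            rw [Multiset.card_eq_zero.mp h0] at hx
            exact absurd hx (Multiset.notMem_zero x)
          omega
        have heS : (M.erase x).sum ∈ S :=
          ih (M.erase x) hecard (fun z hz => hmem z (Multiset.mem_of_mem_erase hz)) hdΦ
        rw [← hsplit]
        exact hS.2.2 x hxS _ heS (hsplit ▸ hΦ)

lemma nonantisym_zero (R : RootSys V) (T : Set V) (h : ¬ IsAntisymSet (R.clos T)) :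
    ∃ N : Multiset V, N ≠ 0 ∧ (∀ x ∈ N, x ∈ T) ∧ N.sum = 0 := by
  unfold IsAntisymSet at h
  push_neg at h
  obtain ⟨β, hβ, hβ'⟩ := h
  obtain ⟨hβΦ, M₁, hM₁, hs₁⟩ := hβ
  obtain ⟨-, M₂, hM₂, hs₂⟩ := hβ'
  refine ⟨M₁ + M₂, ?_, ?_, ?_⟩
  · intro h0
    have hM₁0 : M₁ = 0 := by
      have := congrArg Multiset.card h0
      simp only [Multiset.card_add, Multiset.card_zero] at this
      exact Multiset.card_eq_zero.mp (by omega)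
    rw [hM₁0] at hs₁
    exact R.nonzero β hβΦ (by simpa using hs₁.symm)
  · intro x hx
    rcases Multiset.mem_add.mp hx with h | h
    · exact hM₁ x h
    · exact hM₂ x h
  · rw [Multiset.sum_add, hs₁, hs₂, add_neg_cancel]

/-- Key extension step: if `γ` and `-γ` are both missing, one of the two closures
is antisymmetric. -/
lemma extend_aux (R : RootSys V) (hcr : R.IsCrystallographic)
    (S : Set V) (hS : R.IsPoset S) {γ : V} (hγ : γ ∈ R.Φ)
    (h1 : γ ∉ S) (h2 : -γ ∉ S) :
    IsAntisymSet (R.clos (S ∪ {γ})) ∨ IsAntisymSet (R.clos (S ∪ {-γ})) := by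
  classical
  by_contra hc
  push_neg at hc
  obtain ⟨ha1, ha2⟩ := hc
  obtain ⟨N₁, hN₁0, hN₁mem, hN₁sum⟩ := nonantisym_zero R _ ha1
  obtain ⟨N₂, hN₂0, hN₂mem, hN₂sum⟩ := nonantisym_zero R _ ha2
  set k := N₁.count γ with hk
  set P₁ := N₁.filter (· ≠ γ) with hP₁def
  have hsplit₁ : Multiset.replicate k γ + P₁ = N₁ := by
    rw [hk, ← Multiset.filter_eq' N₁ γ, hP₁def]
    exact Multiset.filter_add_not _ _
  have hP₁S : ∀ x ∈ P₁, x ∈ S := by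
    intro x hx
    obtain ⟨hxN, hxne⟩ := Multiset.mem_filter.mp hx
    rcases hN₁mem x hxN with h | h
    · exact h
    · exact absurd h hxne
  have hsum₁ : k • γ + P₁.sum = 0 := by
    rw [← Multiset.sum_replicate, ← Multiset.sum_add, hsplit₁, hN₁sum]
  set m := N₂.count (-γ) with hm
  set P₂ := N₂.filter (· ≠ -γ) with hP₂def
  have hsplit₂ : Multiset.replicate m (-γ) + P₂ = N₂ := by
    rw [hm, ← Multiset.filter_eq' N₂ (-γ), hP₂def]
    exact Multiset.filter_add_not _ _
  have hP₂S : ∀ x ∈ P₂, x ∈ S := by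
    intro x hx
    obtain ⟨hxN, hxne⟩ := Multiset.mem_filter.mp hx
    rcases hN₂mem x hxN with h | h
    · exact h
    · exact absurd h hxne
  have hsum₂ : m • (-γ) + P₂.sum = 0 := by
    rw [← Multiset.sum_replicate, ← Multiset.sum_add, hsplit₂, hN₂sum]
  by_cases hk0 : k = 0
  · have hP₁N : P₁ = N₁ := by rw [← hsplit₁, hk0]; simp
    have := poset_no_zero_sum R hcr S hS (Multiset.card N₁) N₁ le_rfl
      (hP₁N ▸ hP₁S) hN₁sum
    exact hN₁0 this
  by_cases hm0 : m = 0
  · have hP₂N : P₂ = N₂ := by rw [← hsplit₂, hm0]; simp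
    have := poset_no_zero_sum R hcr S hS (Multiset.card N₂) N₂ le_rfl
      (hP₂N ▸ hP₂S) hN₂sum
    exact hN₂0 this
  · by_cases hP0 : P₁ = 0 ∧ P₂ = 0
    · rw [hP0.1] at hsum₁
      simp only [Multiset.sum_zero, add_zero] at hsum₁
      have : (k : ℝ) • γ = 0 := by rw [Nat.cast_smul_eq_nsmul]; exact hsum₁
      rcases smul_eq_zero.mp this with h | h
      · exact hk0 (by exact_mod_cast h)
      · exact R.nonzero γ hγ h
    · set Q : Multiset V := m • P₁ + k • P₂ with hQ
      have hQ0 : Q ≠ 0 := by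
        intro h0
        have := congrArg Multiset.card h0
        simp only [hQ, Multiset.card_add, Multiset.card_nsmul, Multiset.card_zero] at this
        have e12 : m * Multiset.card P₁ = 0 ∧ k * Multiset.card P₂ = 0 := by omega
        have hc1 : Multiset.card P₁ = 0 :=
          (Nat.mul_eq_zero.mp e12.1).resolve_left hm0
        have hc2 : Multiset.card P₂ = 0 :=
          (Nat.mul_eq_zero.mp e12.2).resolve_left hk0
        exact hP0 ⟨Multiset.card_eq_zero.mp hc1, Multiset.card_eq_zero.mp hc2⟩
      have hQmem : ∀ x ∈ Q, x ∈ S := by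
        intro x hx
        rcases Multiset.mem_add.mp hx with h | h
        · exact hP₁S x (Multiset.mem_of_mem_nsmul h)
        · exact hP₂S x (Multiset.mem_of_mem_nsmul h)
      have hQsum : Q.sum = 0 := by
        have e1 : P₁.sum = -(k • γ) := eq_neg_of_add_eq_zero_right hsum₁
        have e2 : P₂.sum = -(m • (-γ)) := eq_neg_of_add_eq_zero_right hsum₂
        rw [hQ, Multiset.sum_add, multiset_nsmul_sum, multiset_nsmul_sum, e1, e2]
        simp only [smul_neg, neg_neg, smul_smul]
        rw [mul_comm]
        exact neg_add_cancel _
      exact hQ0 (poset_no_zero_sum R hcr S hS (Multiset.card Q) Q le_rfl hQmem hQsum)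

lemma clos_poset (R : RootSys V) (S : Set V) (hS : R.IsPoset S) {δ : V} (hδ : δ ∈ R.Φ)
    (ha : IsAntisymSet (R.clos (S ∪ {δ}))) : R.IsPoset (R.clos (S ∪ {δ})) := by
  refine ⟨fun x hx => hx.1, ha, ?_⟩
  intro a ha' b hb' hab
  obtain ⟨-, M₁, hM₁, hs₁⟩ := ha'
  obtain ⟨-, M₂, hM₂, hs₂⟩ := hb'
  refine ⟨hab, M₁ + M₂, ?_, by rw [Multiset.sum_add, hs₁, hs₂]⟩
  intro x hx
  rcases Multiset.mem_add.mp hx with h | h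
  · exact hM₁ x h
  · exact hM₂ x h

lemma clos_superset (R : RootSys V) (S : Set V) (hS : R.IsPoset S) {δ : V} (hδ : δ ∈ R.Φ) :
    S ⊆ R.clos (S ∪ {δ}) := by
  intro s hs
  refine ⟨hS.1 hs, {s}, ?_, Multiset.sum_singleton s⟩
  intro x hx
  rw [Multiset.mem_singleton.mp hx]
  exact Or.inl hs

lemma clos_self_mem (R : RootSys V) (S : Set V) {δ : V} (hδ : δ ∈ R.Φ) :
    δ ∈ R.clos (S ∪ {δ}) := by
  refine ⟨hδ, {δ}, ?_, Multiset.sum_singleton δ⟩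
  intro x hx
  rw [Multiset.mem_singleton.mp hx]
  exact Or.inr rfl

theorem stmt6 (R : RootSys V) (hcr : R.IsCrystallographic)
    (S : Set V) (hS : R.IsPoset S) :
    (∀ T : Set V, R.IsPoset T → S ⊆ T → T = S) ↔ (∀ α ∈ R.Φ, α ∈ S ∨ -α ∈ S) := by
  constructor
  · intro h α hα
    by_contra hc
    push_neg at hc
    obtain ⟨h1, h2⟩ := hc
    rcases extend_aux R hcr S hS hα h1 h2 with ha | ha
    · have heq := h _ (clos_poset R S hS hα ha) (clos_superset R S hS hα)
      exact h1 (heq ▸ clos_self_mem R S hα)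
    · have hα' : -α ∈ R.Φ := R.neg_mem hα
      have heq := h _ (clos_poset R S hS hα' ha) (clos_superset R S hS hα')
      exact h2 (heq ▸ clos_self_mem R S hα')
  · intro h T hT hsub
    apply Set.Subset.antisymm _ hsub
    intro x hx
    rcases h x (hT.1 hx) with h' | h'
    · exact h'
    · exact absurd (hsub h') (hT.2.1 x hx)
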